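/- arXiv:2506.06663 — 5 statements merged into one kernel-verified Lean document; each statement's English description precedes it below -/
import Mathlib

section
/- For every positive integer m, ∑_{k=1}^{m} ψ₀(k)/(m+1-k) = ψ₀²(m+1) - ψ₀(1)·ψ₀(m+1) + ψ₁(m+1) - ψ₁(1). -/
open Finset

/-- Digamma function at a positive integer argument: `ψ₀ l = -γ + ∑_{i=1}^{l-1} 1/i`. -/
noncomputable def ψ₀ (l : ℕ) : ℝ :=
  -Real.eulerMascheroniConstant + ∑ i ∈ Finset.range (l - 1), (1 : ℝ) / (i + 1)

/-- Trigamma function at a positive integer argument: `ψ₁ l = π²/6 - ∑_{i=1}^{l-1} 1/i²`. -/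
noncomputable def ψ₁ (l : ℕ) : ℝ :=
  Real.pi ^ 2 / 6 - ∑ i ∈ Finset.range (l - 1), (1 : ℝ) / (i + 1) ^ 2

/-- Tetragamma function at a positive integer argument:
`ψ₂ l = -2ζ(3) + 2∑_{i=1}^{l-1} 1/i³`, where `ζ(3) = ∑_{i=1}^∞ 1/i³`. -/
noncomputable def ψ₂ (l : ℕ) : ℝ :=
  -2 * (∑' i : ℕ, (1 : ℝ) / (i + 1) ^ 3) +
    2 * ∑ i ∈ Finset.range (l - 1), (1 : ℝ) / (i + 1) ^ 3

noncomputable def H (n : ℕ) : ℝ := ∑ i ∈ Finset.range n, (1 : ℝ) / (i + 1)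

lemma H_succ (n : ℕ) : H (n + 1) = H n + 1 / (n + 1) := by
  simp [H, Finset.sum_range_succ]

lemma reflect (m : ℕ) (f : ℕ → ℝ) :
    ∑ j ∈ Finset.Icc 1 m, f (m + 1 - j) = ∑ j ∈ Finset.Icc 1 m, f j := by
  apply Finset.sum_nbij' (fun j => m + 1 - j) (fun j => m + 1 - j) <;>
    intro a ha <;> simp only [Finset.mem_Icc] at * <;> omega

lemma H_eq_Icc (m : ℕ) : H m = ∑ j ∈ Finset.Icc 1 m, (1 : ℝ) / (j : ℝ) := by
  induction m with
  | zero => simp [H]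
  | succ m ih =>
    rw [H_succ, ih, Finset.sum_Icc_succ_top (by omega : 1 ≤ m + 1)]
    push_cast; ring

lemma keyA (m : ℕ) :
    ∑ j ∈ Finset.Icc 1 m, H (m - j) / (j : ℝ) =
      H m ^ 2 - ∑ i ∈ Finset.range m, (1 : ℝ) / (i + 1) ^ 2 := by
  induction m with
  | zero => simp [H]
  | succ m ih =>
    have h1 : ∑ j ∈ Finset.Icc 1 (m + 1), H (m + 1 - j) / (j : ℝ)
        = (∑ j ∈ Finset.Icc 1 m, H (m + 1 - j) / (j : ℝ)) + H 0 / (m + 1) := by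
      rw [Finset.sum_Icc_succ_top (by omega)]
      simp
    have h2 : ∀ j ∈ Finset.Icc 1 m, H (m + 1 - j) / (j : ℝ)
        = H (m - j) / (j : ℝ) + 1 / ((((m + 1 - j : ℕ)) : ℝ) * j) := by
      intro j hj
      simp only [Finset.mem_Icc] at hj
      have e : m + 1 - j = (m - j) + 1 := by omega
      have c1 : ((m - j : ℕ) : ℝ) = (m : ℝ) - j := by
        push_cast [Nat.cast_sub hj.2]; ring
      have c2 : ((m + 1 - j : ℕ) : ℝ) = (m : ℝ) + 1 - j := by
        push_cast [Nat.cast_sub (by omega : j ≤ m + 1)]; ring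
      have hjm : (j : ℝ) ≤ m := by exact_mod_cast hj.2
      have hj1 : (0:ℝ) < j := by exact_mod_cast Nat.lt_of_lt_of_le Nat.zero_lt_one hj.1
      have c3 : ((m - j + 1 : ℕ) : ℝ) = (m : ℝ) + 1 - j := by
        push_cast [Nat.cast_sub hj.2]; ring
      rw [e, H_succ, c1, c3]
      have hne : (m : ℝ) - j + 1 ≠ 0 := by intro h; nlinarith
      have e2 : (m:ℝ) + 1 - j = (m:ℝ) - j + 1 := by ring
      rw [e2]
      field_simp
    have h3 : ∀ j ∈ Finset.Icc 1 m, (1:ℝ) / ((((m + 1 - j : ℕ)) : ℝ) * j)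
        = (1 / (m+1)) * (1 / j + 1 / ((m + 1 - j : ℕ) : ℝ)) := by
      intro j hj
      simp only [Finset.mem_Icc] at hj
      have c2 : ((m + 1 - j : ℕ) : ℝ) = (m : ℝ) + 1 - j := by
        push_cast [Nat.cast_sub (by omega : j ≤ m + 1)]; ring
      have hjm : (j : ℝ) ≤ m := by exact_mod_cast hj.2
      have hj1 : (0:ℝ) < j := by exact_mod_cast Nat.lt_of_lt_of_le Nat.zero_lt_one hj.1
      rw [c2]
      have hne : (m : ℝ) + 1 - j ≠ 0 := by intro h; nlinarith
      field_simp
      ring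
    have h4 : ∑ j ∈ Finset.Icc 1 m, (1:ℝ) / ((m + 1 - j : ℕ) : ℝ) = H m := by
      rw [reflect m (fun j => (1:ℝ)/ (j:ℝ)), H_eq_Icc]
    rw [h1, Finset.sum_congr rfl h2, Finset.sum_add_distrib,
      Finset.sum_congr rfl h3, ← Finset.mul_sum, Finset.sum_add_distrib, h4,
      ← H_eq_Icc, ih, H_succ, Finset.sum_range_succ]
    have hne : ((m:ℝ)+1) ≠ 0 := by positivity
    simp only [H]
    field_simp
    ring

theorem stmt0 (m : ℕ) (hm : 0 < m) :
    ∑ k ∈ Finset.Icc 1 m, ψ₀ k / ((m + 1 - k : ℕ) : ℝ) =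
      ψ₀ (m + 1) ^ 2 - ψ₀ 1 * ψ₀ (m + 1) + ψ₁ (m + 1) - ψ₁ 1 := by
  have lhs1 : ∑ k ∈ Finset.Icc 1 m, ψ₀ k / ((m + 1 - k : ℕ) : ℝ)
      = ∑ j ∈ Finset.Icc 1 m, ψ₀ (m + 1 - j) / (j : ℝ) := by
    rw [← reflect m (fun j => ψ₀ (m + 1 - j) / (j : ℝ))]
    apply Finset.sum_congr rfl
    intro k hk
    simp only [Finset.mem_Icc] at hk
    have : m + 1 - (m + 1 - k) = k := by omega
    simp [this]
  have hterm : ∀ j ∈ Finset.Icc 1 m, ψ₀ (m + 1 - j) / (j : ℝ)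
      = (-Real.eulerMascheroniConstant + H (m - j)) / (j : ℝ) := by
    intro j hj
    simp only [Finset.mem_Icc] at hj
    have : m + 1 - j - 1 = m - j := by omega
    simp [ψ₀, H, this]
  rw [lhs1, Finset.sum_congr rfl hterm]
  have split : ∑ j ∈ Finset.Icc 1 m,
      (-Real.eulerMascheroniConstant + H (m - j)) / (j : ℝ)
      = -Real.eulerMascheroniConstant * (∑ j ∈ Finset.Icc 1 m, (1:ℝ)/(j:ℝ))
        + ∑ j ∈ Finset.Icc 1 m, H (m - j) / (j : ℝ) := by
    rw [Finset.mul_sum, ← Finset.sum_add_distrib]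
    apply Finset.sum_congr rfl
    intro j hj
    ring
  rw [split, ← H_eq_Icc, keyA]
  simp only [ψ₀, ψ₁, Nat.add_sub_cancel]
  simp [H]
  ring
end

section
/- Let m be a positive integer and a an integer with a > m. Then ∑_{k=1}^{m} ψ₀(k)/(a+1-k) = -∑_{k=1}^{m} ψ₀(k+a-m)/k + (1/2)·( (ψ₀(a+1) - ψ₀(a-m))² + 2ψ₀(m+1)·(-ψ₀(a-m+1) + ψ₀(a-m) + ψ₀(a+1)) - 2ψ₀(1)·ψ₀(a-m) - ψ₁(a-m) + ψ₁(a+1) ). -/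
open Finset

lemma psi0_succ (l : ℕ) : ψ₀ (l + 1) = ψ₀ l + 1 / (l : ℝ) := by
  unfold ψ₀
  cases l with
  | zero => simp
  | succ n => rw [Nat.add_sub_cancel, Nat.add_sub_cancel, Finset.sum_range_succ]; push_cast; ring

lemma psi1_succ (l : ℕ) : ψ₁ (l + 1) = ψ₁ l - 1 / (l : ℝ) ^ 2 := by
  unfold ψ₁
  cases l with
  | zero => simp
  | succ n => rw [Nat.add_sub_cancel, Nat.add_sub_cancel, Finset.sum_range_succ]; push_cast; ring

lemma hshift (m c : ℕ) :
    ∑ k ∈ Icc 1 m, (1 : ℝ) / (k + c) = ψ₀ (m + c + 1) - ψ₀ (c + 1) := by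
  induction m with
  | zero => simp
  | succ n ih =>
      rw [Finset.sum_Icc_succ_top (by omega), ih, show n + 1 + c + 1 = (n + c + 1) + 1 from by omega,
        psi0_succ (n + c + 1)]
      push_cast; ring

lemma hps (m b : ℕ) (hb : 1 ≤ b) :
    ∑ k ∈ Icc 1 m, (1 : ℝ) / (k * (k + b)) =
      1 / b * (ψ₀ (m + 1) - ψ₀ 1 - ψ₀ (m + b + 1) + ψ₀ (b + 1)) := by
  have e0 : ∑ k ∈ Icc 1 m, (1 : ℝ) / k = ψ₀ (m + 1) - ψ₀ 1 := by
    simpa using hshift m 0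
  have eb := hshift m b
  have h1 : ∑ k ∈ Icc 1 m, (1 : ℝ) / (k * (k + b)) =
      1 / b * (∑ k ∈ Icc 1 m, (1 : ℝ) / k - ∑ k ∈ Icc 1 m, (1 : ℝ) / (k + b)) := by
    rw [← Finset.sum_sub_distrib, Finset.mul_sum]
    refine Finset.sum_congr rfl fun k hk => ?_
    have hk1 : 1 ≤ k := (Finset.mem_Icc.mp hk).1
    have hk0 : (k : ℝ) ≠ 0 := Nat.cast_ne_zero.mpr (by omega)
    have hb0 : (b : ℝ) ≠ 0 := Nat.cast_ne_zero.mpr (by omega)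
    have hkb : (k : ℝ) + b ≠ 0 := by positivity
    field_simp
    ring
  rw [h1, e0, eb]; ring

lemma aux (m : ℕ) : ∀ b : ℕ, 1 ≤ m → 1 ≤ b →
    ∑ k ∈ Icc 1 m, ψ₀ k / ((m : ℝ) + b + 1 - k) =
      -∑ k ∈ Icc 1 m, ψ₀ (k + b) / (k : ℝ) +
        (1 / 2) * ((ψ₀ (m + b + 1) - ψ₀ b) ^ 2 +
          2 * ψ₀ (m + 1) * (-ψ₀ (b + 1) + ψ₀ b + ψ₀ (m + b + 1)) -
          2 * ψ₀ 1 * ψ₀ b - ψ₁ b + ψ₁ (m + b + 1)) := by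
  induction m with
  | zero => intro b hm hb; exact absurd hm (by omega)
  | succ n ih =>
      intro b hm hb
      rcases Nat.eq_zero_or_pos n with h0 | h1
      · subst h0
        simp only [Finset.Icc_self, Finset.sum_singleton]
        have e1 : ψ₀ (b + 1) = ψ₀ b + 1 / (b : ℝ) := psi0_succ b
        have e2 : ψ₀ (1 + b) = ψ₀ b + 1 / (b : ℝ) := by
          rw [show 1 + b = b + 1 from by omega]; exact e1
        have e3 : ψ₀ (0 + 1 + b + 1) = ψ₀ b + 1 / (b : ℝ) + 1 / ((b : ℝ) + 1) := by
          rw [show 0 + 1 + b + 1 = (b + 1) + 1 from by omega, psi0_succ (b + 1), e1]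
          push_cast; ring
        have e4 : ψ₀ (0 + 1 + 1) = ψ₀ 1 + 1 := by
          rw [show 0 + 1 + 1 = 1 + 1 from rfl, psi0_succ 1]; norm_num
        have e5 : ψ₁ (0 + 1 + b + 1) = ψ₁ b - 1 / (b : ℝ) ^ 2 - 1 / ((b : ℝ) + 1) ^ 2 := by
          rw [show 0 + 1 + b + 1 = (b + 1) + 1 from by omega, psi1_succ (b + 1), psi1_succ b]
          push_cast; ring
        rw [e2, e3, e4, e5, e1]
        have hb0 : (b : ℝ) ≠ 0 := Nat.cast_ne_zero.mpr (by omega)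
        have hb1 : (b : ℝ) + 1 ≠ 0 := by positivity
        push_cast
        rw [show (1 : ℝ) + b + 1 - 1 = b + 1 by ring]
        field_simp
        ring
      · have ihb := ih (b + 1) h1 (by omega)
        rw [Finset.sum_Icc_succ_top (by omega : 1 ≤ n + 1),
            Finset.sum_Icc_succ_top (by omega : 1 ≤ n + 1)]
        have hsplit : ∑ k ∈ Icc 1 n, ψ₀ (k + b) / (k : ℝ) =
            ∑ k ∈ Icc 1 n, ψ₀ (k + (b + 1)) / (k : ℝ) -
              ∑ k ∈ Icc 1 n, (1 : ℝ) / (k * (k + b)) := by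
          rw [← Finset.sum_sub_distrib]
          refine Finset.sum_congr rfl fun k hk => ?_
          have hk1 : 1 ≤ k := (Finset.mem_Icc.mp hk).1
          rw [show k + (b + 1) = (k + b) + 1 from by omega, psi0_succ (k + b)]
          have hk0 : (k : ℝ) ≠ 0 := Nat.cast_ne_zero.mpr (by omega)
          have hkb : (k : ℝ) + b ≠ 0 := by positivity
          push_cast
          field_simp
          ring
        rw [hsplit, hps n b hb]
        push_cast at ihb ⊢
        simp only [show n + (b + 1) + 1 = n + 1 + b + 1 from by omega,
          show ∀ x : ℕ, (n : ℝ) + ((b : ℝ) + 1) + 1 - (x : ℝ) = (n : ℝ) + 1 + (b : ℝ) + 1 - (x : ℝ)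
            from fun x => by ring] at ihb
        have hA : ψ₀ (n + 1 + b + 1) = ψ₀ (n + 1 + b) + 1 / ((n : ℝ) + 1 + b) := by
          simpa using psi0_succ (n + 1 + b)
        have hB2 : ψ₀ (b + 1 + 1) = ψ₀ (b + 1) + 1 / ((b : ℝ) + 1) := by
          simpa using psi0_succ (b + 1)
        have hB1 : ψ₀ (b + 1) = ψ₀ b + 1 / (b : ℝ) := psi0_succ b
        have hM : ψ₀ (n + 1 + 1) = ψ₀ (n + 1) + 1 / ((n : ℝ) + 1) := by
          simpa using psi0_succ (n + 1)
        have hW : ψ₁ (b + 1) = ψ₁ b - 1 / (b : ℝ) ^ 2 := psi1_succ b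
        rw [show n + b + 1 = n + 1 + b from by omega,
          show ((n : ℝ) + 1 + b + 1 - ((n : ℝ) + 1)) = (b : ℝ) + 1 from by ring]
        rw [hA, hB2, hB1, hW] at ihb
        rw [hA, hM, hB1, ihb]
        have hb0 : (b : ℝ) ≠ 0 := Nat.cast_ne_zero.mpr (by omega)
        have hb1 : (b : ℝ) + 1 ≠ 0 := by positivity
        have hn1 : (n : ℝ) + 1 ≠ 0 := by positivity
        have hnb : (n : ℝ) + 1 + b ≠ 0 := by positivity
        field_simp
        ring

theorem stmt3 (m a : ℕ) (hm : 0 < m) (ha : m < a) :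
    ∑ k ∈ Finset.Icc 1 m, ψ₀ k / ((a + 1 - k : ℕ) : ℝ) =
      -∑ k ∈ Finset.Icc 1 m, ψ₀ (k + a - m) / (k : ℝ) +
        (1 / 2) * ((ψ₀ (a + 1) - ψ₀ (a - m)) ^ 2 +
          2 * ψ₀ (m + 1) * (-ψ₀ (a - m + 1) + ψ₀ (a - m) + ψ₀ (a + 1)) -
          2 * ψ₀ 1 * ψ₀ (a - m) - ψ₁ (a - m) + ψ₁ (a + 1)) := by
  obtain ⟨b, hb1, rfl⟩ : ∃ b, 1 ≤ b ∧ a = m + b := ⟨a - m, by omega, by omega⟩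
  have e1 : ∑ k ∈ Finset.Icc 1 m, ψ₀ k / ((m + b + 1 - k : ℕ) : ℝ) =
      ∑ k ∈ Finset.Icc 1 m, ψ₀ k / ((m : ℝ) + b + 1 - k) := by
    refine Finset.sum_congr rfl fun k hk => ?_
    have hk2 : k ≤ m := (Finset.mem_Icc.mp hk).2
    rw [Nat.cast_sub (by omega)]
    push_cast; ring_nf
  have e2 : ∀ k : ℕ, k + (m + b) - m = k + b := fun k => by omega
  have e3 : m + b - m = b := by omega
  simp only [e2, e3]
  rw [e1, aux m b hm hb1, show m + b + 1 = m + (b + 1) from by omega]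
end

section
/- Let m be a positive integer and a an integer with a > m. Then ∑_{k=1}^{m} ψ₁(k)/(a+1-k) = ∑_{k=1}^{m} ( -ψ₁(k+a-m)/k + ψ₁(k)/(k+a-m) - ψ₁(k+a-m)/(k+a-m) ) - ψ₁(m+1)·ψ₀(a-m+1) + (1/(a-m)²)·(ψ₀(a-m+1) - ψ₀(a+1) + ψ₀(m+1) - ψ₀(1)) + (1/(a-m))·(ψ₁(a+1) - ψ₁(a-m+1)) + (1/2)·( -2ψ₁(a+1)·(ψ₀(a-m+1) - ψ₀(m+1) + ψ₀(1)) + 2ψ₁(m+1)·ψ₀(a-m+1) - ψ₂(a-m+1) + ψ₂(a+1) ) + ψ₀(a+1)·(ψ₁(a+1) - ψ₁(1)) + ψ₁(1)·ψ₀(a+1). -/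
open Finset

noncomputable def Hs (n : ℕ) : ℝ := ∑ i ∈ Finset.range n, (1 : ℝ) / (i + 1)
noncomputable def Hs2 (n : ℕ) : ℝ := ∑ i ∈ Finset.range n, (1 : ℝ) / (i + 1) ^ 2
noncomputable def Hs3 (n : ℕ) : ℝ := ∑ i ∈ Finset.range n, (1 : ℝ) / (i + 1) ^ 3

lemma Hs_succ (n : ℕ) : Hs (n + 1) = Hs n + 1 / ((n : ℝ) + 1) := by
  simp [Hs, Finset.sum_range_succ]

lemma Hs2_succ (n : ℕ) : Hs2 (n + 1) = Hs2 n + 1 / ((n : ℝ) + 1) ^ 2 := by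
  simp [Hs2, Finset.sum_range_succ]

lemma Hs3_succ (n : ℕ) : Hs3 (n + 1) = Hs3 n + 1 / ((n : ℝ) + 1) ^ 3 := by
  simp [Hs3, Finset.sum_range_succ]

lemma Hs_zero : Hs 0 = 0 := by simp [Hs]
lemma Hs2_zero : Hs2 0 = 0 := by simp [Hs2]

lemma sum_inv_shift (d m : ℕ) :
    ∑ i ∈ Finset.range m, (1 : ℝ) / ((i : ℝ) + 1 + d) = Hs (m + d) - Hs d := by
  induction m with
  | zero => simp
  | succ n ih =>
    rw [Finset.sum_range_succ, ih, show n + 1 + d = (n + d) + 1 from by omega, Hs_succ]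
    push_cast
    ring

lemma refl_sq (m : ℕ) :
    ∑ k ∈ Finset.range m, (1 : ℝ) / ((m - k : ℕ) : ℝ) ^ 2 = Hs2 m := by
  rw [Hs2, ← Finset.sum_range_reflect (fun k => (1 : ℝ) / ((k : ℝ) + 1) ^ 2) m]
  apply Finset.sum_congr rfl
  intro k hk
  simp only [Finset.mem_range] at hk
  rw [show (m - k : ℕ) = (m - 1 - k) + 1 from by omega]
  push_cast
  ring

lemma refl_lin (m : ℕ) :
    ∑ k ∈ Finset.range m, (1 : ℝ) / ((m - k : ℕ) : ℝ) = Hs m := by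
  rw [Hs, ← Finset.sum_range_reflect (fun k => (1 : ℝ) / ((k : ℝ) + 1)) m]
  apply Finset.sum_congr rfl
  intro k hk
  simp only [Finset.mem_range] at hk
  rw [show (m - k : ℕ) = (m - 1 - k) + 1 from by omega]
  push_cast
  ring

lemma pf_sum (d m : ℕ) :
    ∑ k ∈ Finset.range m, 1 / (((m - k : ℕ) : ℝ) ^ 2 * ((k : ℝ) + 1 + d)) =
      Hs2 m / ((m : ℝ) + 1 + d) + Hs m / ((m : ℝ) + 1 + d) ^ 2 +
        (Hs (m + d) - Hs d) / ((m : ℝ) + 1 + d) ^ 2 := by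
  have hstep : ∀ k ∈ Finset.range m,
      1 / (((m - k : ℕ) : ℝ) ^ 2 * ((k : ℝ) + 1 + d)) =
        (1 / ((m - k : ℕ) : ℝ) ^ 2) / ((m : ℝ) + 1 + d) +
        (1 / ((m - k : ℕ) : ℝ)) / ((m : ℝ) + 1 + d) ^ 2 +
        (1 / ((k : ℝ) + 1 + d)) / ((m : ℝ) + 1 + d) ^ 2 := by
    intro k hk
    simp only [Finset.mem_range] at hk
    have h1 : (k : ℝ) < (m : ℝ) := by exact_mod_cast hk
    have hx : ((m : ℝ) - k) ≠ 0 := by linarith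
    have hy : ((k : ℝ) + 1 + (d : ℝ)) ≠ 0 := by positivity
    have hs : ((m : ℝ) + 1 + (d : ℝ)) ≠ 0 := by positivity
    rw [Nat.cast_sub hk.le]
    field_simp
    ring
  rw [Finset.sum_congr rfl hstep, Finset.sum_add_distrib, Finset.sum_add_distrib,
    ← Finset.sum_div, ← Finset.sum_div, ← Finset.sum_div, refl_sq, refl_lin, sum_inv_shift]

lemma key (d : ℕ) (hd : 1 ≤ d) (m : ℕ) :
    (∑ k ∈ Finset.range m, (Hs2 (k + d) / ((k : ℝ) + 1) - Hs2 k / ((k : ℝ) + 1 + d)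
        + Hs2 (k + d) / ((k : ℝ) + 1 + d) + Hs2 (m - 1 - k) / ((k : ℝ) + 1 + d)))
      - Hs2 (m + d) * (Hs (m + d) - Hs d + Hs m) + Hs3 (m + d) - Hs3 d
      + (1 / (d : ℝ) ^ 2) * (Hs d - Hs (m + d) + Hs m)
      + (1 / (d : ℝ)) * (Hs2 d - Hs2 (m + d)) = 0 := by
  induction m with
  | zero => simp [Hs_zero]
  | succ n ih =>
    have hcong : ∑ k ∈ Finset.range n,
        (Hs2 (k + d) / ((k : ℝ) + 1) - Hs2 k / ((k : ℝ) + 1 + d)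
          + Hs2 (k + d) / ((k : ℝ) + 1 + d) + Hs2 (n + 1 - 1 - k) / ((k : ℝ) + 1 + d)) =
        ∑ k ∈ Finset.range n,
        ((Hs2 (k + d) / ((k : ℝ) + 1) - Hs2 k / ((k : ℝ) + 1 + d)
          + Hs2 (k + d) / ((k : ℝ) + 1 + d) + Hs2 (n - 1 - k) / ((k : ℝ) + 1 + d))
          + 1 / (((n - k : ℕ) : ℝ) ^ 2 * ((k : ℝ) + 1 + d))) := by
      apply Finset.sum_congr rfl
      intro k hk
      simp only [Finset.mem_range] at hk
      have h1 : n + 1 - 1 - k = (n - 1 - k) + 1 := by omega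
      have h2 : ((n - 1 - k : ℕ) : ℝ) + 1 = ((n - k : ℕ) : ℝ) := by
        rw [show (n - k : ℕ) = (n - 1 - k) + 1 from by omega]
        push_cast; ring
      rw [h1, Hs2_succ, h2, add_div, div_div]
      ring
    have hS : (∑ k ∈ Finset.range n, (Hs2 (k + d) / ((k : ℝ) + 1) - Hs2 k / ((k : ℝ) + 1 + d)
          + Hs2 (k + d) / ((k : ℝ) + 1 + d) + Hs2 (n - 1 - k) / ((k : ℝ) + 1 + d))) =
        Hs2 (n + d) * (Hs (n + d) - Hs d + Hs n) - Hs3 (n + d) + Hs3 d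
          - (1 / (d : ℝ) ^ 2) * (Hs d - Hs (n + d) + Hs n)
          - (1 / (d : ℝ)) * (Hs2 d - Hs2 (n + d)) := by
      linear_combination ih
    rw [Finset.sum_range_succ, hcong, Finset.sum_add_distrib, hS, pf_sum d n,
      show n + 1 - 1 - n = 0 from by omega, Hs2_zero,
      show n + 1 + d = (n + d) + 1 from by omega, Hs_succ, Hs2_succ, Hs3_succ,
      Hs_succ n]
    have hd0 : (d : ℝ) ≠ 0 := Nat.cast_ne_zero.mpr (by omega)
    have hs0 : ((n : ℝ) + 1 + (d : ℝ)) ≠ 0 := by positivity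
    have hn0 : ((n : ℝ) + 1) ≠ 0 := by positivity
    push_cast
    field_simp
    ring

theorem stmt8 (m a : ℕ) (hm : 0 < m) (ha : m < a) :
    ∑ k ∈ Finset.Icc 1 m, ψ₁ k / ((a + 1 - k : ℕ) : ℝ) =
      ∑ k ∈ Finset.Icc 1 m, (-(ψ₁ (k + a - m) / (k : ℝ)) +
          ψ₁ k / ((k + a - m : ℕ) : ℝ) - ψ₁ (k + a - m) / ((k + a - m : ℕ) : ℝ)) -
        ψ₁ (m + 1) * ψ₀ (a - m + 1) +
        (1 / ((a : ℝ) - m) ^ 2) *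
          (ψ₀ (a - m + 1) - ψ₀ (a + 1) + ψ₀ (m + 1) - ψ₀ 1) +
        (1 / ((a : ℝ) - m)) * (ψ₁ (a + 1) - ψ₁ (a - m + 1)) +
        (1 / 2) * (-2 * ψ₁ (a + 1) * (ψ₀ (a - m + 1) - ψ₀ (m + 1) + ψ₀ 1) +
          2 * ψ₁ (m + 1) * ψ₀ (a - m + 1) - ψ₂ (a - m + 1) + ψ₂ (a + 1)) +
        ψ₀ (a + 1) * (ψ₁ (a + 1) - ψ₁ 1) + ψ₁ 1 * ψ₀ (a + 1) := by
  have hpsi0 : ∀ l, ψ₀ l = -Real.eulerMascheroniConstant + Hs (l - 1) := fun l => rfl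
  have hpsi1 : ∀ l, ψ₁ l = Real.pi ^ 2 / 6 - Hs2 (l - 1) := fun l => rfl
  have hpsi2 : ∀ l, ψ₂ l = -2 * (∑' i : ℕ, (1 : ℝ) / (i + 1) ^ 3) + 2 * Hs3 (l - 1) :=
    fun l => rfl
  obtain ⟨e, rfl⟩ : ∃ e, a = m + (e + 1) := ⟨a - m - 1, by omega⟩
  set d : ℕ := e + 1 with hdd
  have hd1 : 1 ≤ d := by omega
  have hL : (∑ k ∈ Finset.Icc 1 m, ψ₁ k / ((m + d + 1 - k : ℕ) : ℝ)) =
      Real.pi ^ 2 / 6 * (Hs (m + d) - Hs d)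
        - ∑ k ∈ Finset.range m, Hs2 (m - 1 - k) / ((k : ℝ) + 1 + d) := by
    rw [← Finset.Ico_add_one_right_eq_Icc, Finset.sum_Ico_eq_sum_range,
      show m + 1 - 1 = m from by omega]
    conv_lhs => rw [← Finset.sum_range_reflect]
    rw [← sum_inv_shift d m, Finset.mul_sum, ← Finset.sum_sub_distrib]
    apply Finset.sum_congr rfl
    intro i hi
    simp only [Finset.mem_range] at hi
    rw [hpsi1, show 1 + (m - 1 - i) - 1 = m - 1 - i from by omega,
      show m + d + 1 - (1 + (m - 1 - i)) = d + 1 + i from by omega]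
    push_cast
    ring
  have hR : (∑ k ∈ Finset.Icc 1 m, (-(ψ₁ (k + (m + d) - m) / (k : ℝ)) +
        ψ₁ k / ((k + (m + d) - m : ℕ) : ℝ) -
        ψ₁ (k + (m + d) - m) / ((k + (m + d) - m : ℕ) : ℝ))) =
      -(Real.pi ^ 2 / 6 * Hs m)
        + ∑ k ∈ Finset.range m, (Hs2 (k + d) / ((k : ℝ) + 1) - Hs2 k / ((k : ℝ) + 1 + d)
            + Hs2 (k + d) / ((k : ℝ) + 1 + d)) := by
    rw [← Finset.Ico_add_one_right_eq_Icc, Finset.sum_Ico_eq_sum_range,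
      show m + 1 - 1 = m from by omega, Hs, Finset.mul_sum, ← Finset.sum_neg_distrib,
      ← Finset.sum_add_distrib]
    apply Finset.sum_congr rfl
    intro i hi
    simp only [Finset.mem_range] at hi
    rw [show 1 + i + (m + d) - m = i + 1 + d from by omega]
    simp only [hpsi1]
    rw [show i + 1 + d - 1 = i + d from by omega, show 1 + i - 1 = i from by omega]
    push_cast
    ring
  have hsplit : (∑ k ∈ Finset.range m, (Hs2 (k + d) / ((k : ℝ) + 1) - Hs2 k / ((k : ℝ) + 1 + d)
        + Hs2 (k + d) / ((k : ℝ) + 1 + d) + Hs2 (m - 1 - k) / ((k : ℝ) + 1 + d))) =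
      (∑ k ∈ Finset.range m, (Hs2 (k + d) / ((k : ℝ) + 1) - Hs2 k / ((k : ℝ) + 1 + d)
        + Hs2 (k + d) / ((k : ℝ) + 1 + d)))
      + ∑ k ∈ Finset.range m, Hs2 (m - 1 - k) / ((k : ℝ) + 1 + d) := by
    rw [← Finset.sum_add_distrib]
  rw [hL, hR,
    show m + d - m + 1 = d + 1 from by omega,
    show ((m + d : ℕ) : ℝ) = (m : ℝ) + (d : ℝ) from by push_cast; ring]
  simp only [hpsi0, hpsi1, hpsi2, Nat.add_sub_cancel, show 1 - 1 = 0 from rfl,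
    Hs_zero, Hs2_zero]
  linear_combination (-1 : ℝ) * key d hd1 m + hsplit
end

section
/- Let m and b be positive integers. Then ∑_{k=1}^{m} ψ₀(k)·ψ₀(k+b)/(k+b) = -(1/2)·∑_{k=1}^{m} ( ψ₀²(k+b)/k + ψ₁(k+b)/k ) - (1/b)·∑_{k=1}^{m} ψ₀(k+b)/k + (1/(2b))·( ψ₀²(b+m+1) + ψ₁(b+m+1) - ψ₀²(b+1) - ψ₁(b+1) ) + (1/2)·( ψ₀(m+1)·(ψ₀²(b+m+1) + ψ₁(b+m+1)) - ψ₀(1)·ψ₀²(b+1) - ψ₀(1)·ψ₁(b+1) ). -/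
open Finset

lemma ψ₀_succ (n : ℕ) (hn : 0 < n) : ψ₀ (n + 1) = ψ₀ n + 1 / (n : ℝ) := by
  obtain ⟨k, rfl⟩ := Nat.exists_eq_succ_of_ne_zero hn.ne'
  unfold ψ₀
  simp [Finset.sum_range_succ]
  push_cast
  ring

lemma ψ₁_succ (n : ℕ) (hn : 0 < n) : ψ₁ (n + 1) = ψ₁ n - 1 / (n : ℝ) ^ 2 := by
  obtain ⟨k, rfl⟩ := Nat.exists_eq_succ_of_ne_zero hn.ne'
  unfold ψ₁
  simp [Finset.sum_range_succ]
  push_cast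
  ring

theorem stmt15 (m b : ℕ) (hm : 0 < m) (hb : 0 < b) :
    ∑ k ∈ Finset.Icc 1 m, ψ₀ k * ψ₀ (k + b) / ((k : ℝ) + b) =
      -(1 / 2) * ∑ k ∈ Finset.Icc 1 m,
          (ψ₀ (k + b) ^ 2 / (k : ℝ) + ψ₁ (k + b) / (k : ℝ)) -
        (1 / (b : ℝ)) * ∑ k ∈ Finset.Icc 1 m, ψ₀ (k + b) / (k : ℝ) +
        (1 / (2 * (b : ℝ))) * (ψ₀ (b + m + 1) ^ 2 + ψ₁ (b + m + 1) -
          ψ₀ (b + 1) ^ 2 - ψ₁ (b + 1)) +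
        (1 / 2) * (ψ₀ (m + 1) * (ψ₀ (b + m + 1) ^ 2 + ψ₁ (b + m + 1)) -
          ψ₀ 1 * ψ₀ (b + 1) ^ 2 - ψ₀ 1 * ψ₁ (b + 1)) := by
  clear hm
  have hb0 : (b : ℝ) ≠ 0 := Nat.cast_ne_zero.mpr hb.ne'
  induction m with
  | zero => simp; ring
  | succ n ih =>
    rw [Finset.sum_Icc_succ_top (by omega), Finset.sum_Icc_succ_top (by omega),
      Finset.sum_Icc_succ_top (by omega), ih]
    have e1 : b + (n + 1) + 1 = (b + n + 1) + 1 := by omega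
    have e2 : n + 1 + b = b + n + 1 := by omega
    have e3 : n + 1 + 1 = (n + 1) + 1 := rfl
    rw [e1, e2, ψ₀_succ (b + n + 1) (by omega), ψ₁_succ (b + n + 1) (by omega),
      ψ₀_succ (n + 1) (by omega)]
    push_cast
    have h1 : (n : ℝ) + 1 ≠ 0 := by positivity
    have h2 : (b : ℝ) + n + 1 ≠ 0 := by positivity
    field_simp
    ring
end

section
/- Let m, a, b be positive integers. Then ∑_{k=1}^{m} (1/(k+a) + 1/(k+b))·(ψ₀(k+a+b+m) - ψ₀(k+a+b)) = [m/(a(a+m))]·(ψ₀(b+m+1) - ψ₀(b+1)) + [m/(b(b+m))]·(ψ₀(a+m+1) - ψ₀(a+1)) - ψ₀(b+1)·ψ₀(a+m+1) - ψ₀(a+1)·ψ₀(b+m+1) + ψ₀(a+m+1)·ψ₀(b+m+1) - (1/(a+m) + 1/a + 1/(b+m) + 1/b)·ψ₀(a+b+m+1) + [(a+b+2m)/((a+m)(b+m))]·ψ₀(a+b+2m+1) + ψ₀(a+1)·ψ₀(b+1) + (1/a + 1/b)·ψ₀(a+b+1). -/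
open Finset

set_option maxHeartbeats 1000000

/-- Harmonic number `H n = ∑_{i=1}^n 1/i`. -/
noncomputable def Hh (n : ℕ) : ℝ := ∑ i ∈ Finset.range n, (1 : ℝ) / (i + 1)

lemma Hh_succ (n : ℕ) : Hh (n + 1) = Hh n + 1 / ((n : ℝ) + 1) := by
  simp [Hh, Finset.sum_range_succ]

lemma psi_succ (n : ℕ) : ψ₀ (n + 1) = -Real.eulerMascheroniConstant + Hh n := by
  simp [ψ₀, Hh]

lemma sumInv (c m : ℕ) :
    ∑ i ∈ Finset.range m, (1 : ℝ) / ((i : ℝ) + 1 + c) = Hh (c + m) - Hh c := by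
  induction m with
  | zero => simp
  | succ m ih =>
    rw [Finset.sum_range_succ, ih, show c + (m + 1) = (c + m) + 1 from rfl, Hh_succ]
    push_cast; ring

/-- Partial fractions: if `q = p + d` then `1/(pq) = (1/d)(1/p - 1/q)`. -/
lemma pf (p q d : ℝ) (hp : p ≠ 0) (hq : q ≠ 0) (hd : d ≠ 0) (h : q = p + d) :
    1/p * (1/q) = 1/d * (1/p - 1/q) := by
  subst h; field_simp; try ring

/-- The purely algebraic identity behind the inductive step. -/
lemma stepAlg (x y z Ha Hb Ham Hbm Hab Habm Hab2m : ℝ)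
    (hx : x ≠ 0) (hy : y ≠ 0) (hxz : x + z ≠ 0) (hyz : y + z ≠ 0)
    (h1 : x + z + 1 ≠ 0) (h2 : y + z + 1 ≠ 0) (h3 : x + y + z + 1 ≠ 0)
    (h4 : x + y + 2*z + 1 ≠ 0) (h5 : x + y + 2*z + 2 ≠ 0) :
    (z / (x * (x + z)) * (Hbm - Hb) + z / (y * (y + z)) * (Ham - Ha) - Hb * Ham - Ha * Hbm
      + Ham * Hbm - (1/(x+z) + 1/x + 1/(y+z) + 1/y) * Habm
      + (x + y + 2*z)/((x+z)*(y+z)) * Hab2m + Ha * Hb + (1/x + 1/y) * Hab)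
    + 1/(y+z) * (Ham - Ha - Hab2m + Habm) + 1/(x+z) * (Hbm - Hb - Hab2m + Habm)
    + (1/(x+z+1) + 1/(y+z+1)) * (Hab2m + 1/(x+y+2*z+1) - Habm) =
    ((z+1) / (x * (x + z + 1)) * ((Hbm + 1/(y+z+1)) - Hb)
      + (z+1) / (y * (y + z + 1)) * ((Ham + 1/(x+z+1)) - Ha)
      - Hb * (Ham + 1/(x+z+1)) - Ha * (Hbm + 1/(y+z+1))
      + (Ham + 1/(x+z+1)) * (Hbm + 1/(y+z+1))
      - (1/(x+z+1) + 1/x + 1/(y+z+1) + 1/y) * (Habm + 1/(x+y+z+1))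
      + (x + y + 2*z + 2)/((x+z+1)*(y+z+1)) * (Hab2m + 1/(x+y+2*z+1) + 1/(x+y+2*z+2))
      + Ha * Hb + (1/x + 1/y) * Hab) := by
  have c1 : z/(y*(y+z)) + 1/(y+z) = (z+1)/(y*(y+z+1)) + 1/(y+z+1) := by
    field_simp; ring
  have c2 : z/(x*(x+z)) + 1/(x+z) = (z+1)/(x*(x+z+1)) + 1/(x+z+1) := by
    field_simp; ring
  have c4 : (x+y+2*z)/((x+z)*(y+z)) - 1/(y+z) - 1/(x+z) + (1/(x+z+1)+1/(y+z+1))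
      = (x+y+2*z+2)/((x+z+1)*(y+z+1)) := by
    field_simp; ring
  have c5 : (1/(x+z+1)+1/(y+z+1)) * (1/(x+y+2*z+1))
      = (z+1)/(x*(x+z+1)) * (1/(y+z+1)) + (z+1)/(y*(y+z+1)) * (1/(x+z+1))
        + (1/(x+z+1))*(1/(y+z+1))
        - (1/(x+z+1)+1/x+1/(y+z+1)+1/y) * (1/(x+y+z+1))
        + (x+y+2*z+2)/((x+z+1)*(y+z+1)) * (1/(x+y+2*z+1)+1/(x+y+2*z+2)) := by
    have h4' : x + y + z * 2 + 1 ≠ 0 := by contrapose! h4; linarith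
    have h5' : x + y + z * 2 + 2 ≠ 0 := by contrapose! h5; linarith
    field_simp
    field_simp
    ring
  linear_combination (Ham - Ha) * c1 + (Hbm - Hb) * c2 + Hab2m * c4 + c5

lemma key_s17 (a b : ℕ) (ha : 0 < a) (hb : 0 < b) : ∀ m : ℕ, 0 < m →
    ∑ i ∈ Finset.range m, ((1 : ℝ) / ((i : ℝ) + 1 + a) + 1 / ((i : ℝ) + 1 + b)) *
        (Hh (i + a + b + m) - Hh (i + a + b)) =
      ((m : ℝ) / ((a : ℝ) * ((a : ℝ) + m))) * (Hh (b + m) - Hh b) +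
      ((m : ℝ) / ((b : ℝ) * ((b : ℝ) + m))) * (Hh (a + m) - Hh a) -
      Hh b * Hh (a + m) - Hh a * Hh (b + m) + Hh (a + m) * Hh (b + m) -
      (1 / ((a : ℝ) + m) + 1 / (a : ℝ) + 1 / ((b : ℝ) + m) + 1 / (b : ℝ)) * Hh (a + b + m) +
      (((a : ℝ) + b + 2 * m) / (((a : ℝ) + m) * ((b : ℝ) + m))) * Hh (a + b + 2 * m) +
      Hh a * Hh b + (1 / (a : ℝ) + 1 / (b : ℝ)) * Hh (a + b) := by
  have ha0 : (0 : ℝ) < a := by exact_mod_cast ha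
  have hb0 : (0 : ℝ) < b := by exact_mod_cast hb
  intro m
  induction m with
  | zero => omega
  | succ m ih =>
    intro _
    rcases Nat.eq_zero_or_pos m with hm0 | hm
    · subst hm0
      rw [Finset.sum_range_succ, Finset.sum_range_zero, zero_add]
      rw [show (0:ℕ) + a + b + 1 = (a+b) + 1 from by ring, show (0:ℕ) + a + b = a + b from by ring,
        show a + b + 2 * 1 = ((a+b)+1)+1 from by ring]
      rw [Hh_succ ((a+b)+1), Hh_succ (a+b), Hh_succ a, Hh_succ b]
      push_cast
      have h1 : (a : ℝ) + b + 1 ≠ 0 := by positivity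
      have h2 : (a : ℝ) + b + 1 + 1 ≠ 0 := by positivity
      have h3 : (a : ℝ) + 1 ≠ 0 := by positivity
      have h4 : (b : ℝ) + 1 ≠ 0 := by positivity
      have h5 : (0 : ℝ) + 1 + a ≠ 0 := by positivity
      have h6 : (0 : ℝ) + 1 + b ≠ 0 := by positivity
      field_simp
      ring
    · specialize ih hm
      have ham : (0 : ℝ) < (a : ℝ) + m := by positivity
      have hbm : (0 : ℝ) < (b : ℝ) + m := by positivity
      rw [Finset.sum_range_succ]
      have hsplit : ∑ i ∈ Finset.range m, ((1 : ℝ) / ((i : ℝ) + 1 + a) + 1 / ((i : ℝ) + 1 + b)) *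
            (Hh (i + a + b + (m + 1)) - Hh (i + a + b)) =
          (∑ i ∈ Finset.range m, ((1 : ℝ) / ((i : ℝ) + 1 + a) + 1 / ((i : ℝ) + 1 + b)) *
            (Hh (i + a + b + m) - Hh (i + a + b)))
          + (1 / ((b : ℝ) + m)) * ((∑ i ∈ Finset.range m, (1:ℝ) / ((i : ℝ) + 1 + a))
              - ∑ i ∈ Finset.range m, (1:ℝ) / ((i : ℝ) + 1 + ((a + b + m : ℕ) : ℝ)))
          + (1 / ((a : ℝ) + m)) * ((∑ i ∈ Finset.range m, (1:ℝ) / ((i : ℝ) + 1 + b))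
              - ∑ i ∈ Finset.range m, (1:ℝ) / ((i : ℝ) + 1 + ((a + b + m : ℕ) : ℝ))) := by
        rw [← Finset.sum_sub_distrib, ← Finset.sum_sub_distrib, Finset.mul_sum,
          Finset.mul_sum, ← Finset.sum_add_distrib, ← Finset.sum_add_distrib]
        refine Finset.sum_congr rfl fun i _ => ?_
        rw [show i + a + b + (m + 1) = (i + a + b + m) + 1 from rfl, Hh_succ]
        have e1 : ((i:ℝ) + 1 + a) ≠ 0 := by positivity
        have e2 : ((i:ℝ) + 1 + b) ≠ 0 := by positivity
        have e3 : ((i:ℝ) + (a:ℝ) + (b:ℝ) + (m:ℝ) + 1) ≠ 0 := by positivity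
        have e5 : ((a:ℝ) + m) ≠ 0 := ne_of_gt ham
        have e6 : ((b:ℝ) + m) ≠ 0 := ne_of_gt hbm
        have A : 1/((i:ℝ) + 1 + a) * (1/((i:ℝ) + (a:ℝ) + (b:ℝ) + (m:ℝ) + 1))
            = 1/((b:ℝ) + m) * (1/((i:ℝ) + 1 + a) - 1/((i:ℝ) + (a:ℝ) + (b:ℝ) + (m:ℝ) + 1)) :=
          pf _ _ _ e1 e3 e6 (by ring)
        have B : 1/((i:ℝ) + 1 + b) * (1/((i:ℝ) + (a:ℝ) + (b:ℝ) + (m:ℝ) + 1))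
            = 1/((a:ℝ) + m) * (1/((i:ℝ) + 1 + b) - 1/((i:ℝ) + (a:ℝ) + (b:ℝ) + (m:ℝ) + 1)) :=
          pf _ _ _ e2 e3 e5 (by ring)
        push_cast
        linear_combination A + B
      rw [hsplit, ih, sumInv a m, sumInv b m, sumInv (a + b + m) m]
      rw [show a + b + m + m = a + b + 2 * m from by ring,
        show m + a + b + (m + 1) = (a + b + 2 * m) + 1 from by ring,
        show m + a + b = a + b + m from by ring,
        show a + (m + 1) = (a + m) + 1 from rfl,
        show b + (m + 1) = (b + m) + 1 from rfl,
        show a + b + (m + 1) = (a + b + m) + 1 from rfl,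
        show a + b + 2 * (m + 1) = ((a + b + 2 * m) + 1) + 1 from by ring]
      rw [Hh_succ ((a + b + 2*m) + 1), Hh_succ (a + b + 2*m), Hh_succ (a + m),
        Hh_succ (b + m), Hh_succ (a + b + m)]
      push_cast
      have h11 : (a : ℝ) ≠ 0 := ne_of_gt ha0
      have h12 : (b : ℝ) ≠ 0 := ne_of_gt hb0
      have h1 : (a : ℝ) + m ≠ 0 := ne_of_gt ham
      have h2 : (b : ℝ) + m ≠ 0 := ne_of_gt hbm
      have h6 : (a : ℝ) + m + 1 ≠ 0 := by positivity
      have h7 : (b : ℝ) + m + 1 ≠ 0 := by positivity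
      have h8 : (a : ℝ) + b + m + 1 ≠ 0 := by positivity
      have h4 : (a : ℝ) + b + 2 * m + 1 ≠ 0 := by positivity
      have h5 : (a : ℝ) + b + 2 * m + 2 ≠ 0 := by positivity
      linear_combination stepAlg (a : ℝ) (b : ℝ) (m : ℝ) (Hh a) (Hh b) (Hh (a + m))
        (Hh (b + m)) (Hh (a + b)) (Hh (a + b + m)) (Hh (a + b + 2 * m))
        h11 h12 h1 h2 h6 h7 h8 h4 h5

theorem stmt17 (m a b : ℕ) (hm : 0 < m) (ha : 0 < a) (hb : 0 < b) :
    ∑ k ∈ Finset.Icc 1 m, (1 / ((k : ℝ) + a) + 1 / ((k : ℝ) + b)) *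
        (ψ₀ (k + a + b + m) - ψ₀ (k + a + b)) =
      ((m : ℝ) / ((a : ℝ) * ((a : ℝ) + m))) * (ψ₀ (b + m + 1) - ψ₀ (b + 1)) +
      ((m : ℝ) / ((b : ℝ) * ((b : ℝ) + m))) * (ψ₀ (a + m + 1) - ψ₀ (a + 1)) -
      ψ₀ (b + 1) * ψ₀ (a + m + 1) - ψ₀ (a + 1) * ψ₀ (b + m + 1) +
      ψ₀ (a + m + 1) * ψ₀ (b + m + 1) -
      (1 / ((a : ℝ) + m) + 1 / (a : ℝ) + 1 / ((b : ℝ) + m) + 1 / (b : ℝ)) *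
        ψ₀ (a + b + m + 1) +
      (((a : ℝ) + b + 2 * m) / (((a : ℝ) + m) * ((b : ℝ) + m))) *
        ψ₀ (a + b + 2 * m + 1) +
      ψ₀ (a + 1) * ψ₀ (b + 1) + (1 / (a : ℝ) + 1 / (b : ℝ)) * ψ₀ (a + b + 1) := by
  have hL : ∑ k ∈ Finset.Icc 1 m, (1 / ((k : ℝ) + a) + 1 / ((k : ℝ) + b)) *
        (ψ₀ (k + a + b + m) - ψ₀ (k + a + b)) =
      ∑ i ∈ Finset.range m, ((1 : ℝ) / ((i : ℝ) + 1 + a) + 1 / ((i : ℝ) + 1 + b)) *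
        (Hh (i + a + b + m) - Hh (i + a + b)) := by
    rw [← Finset.Ico_add_one_right_eq_Icc, Finset.sum_Ico_eq_sum_range]
    try simp only [Nat.add_sub_cancel]
    refine Finset.sum_congr rfl fun i _ => ?_
    have e1 : 1 + i + a + b + m = (i + a + b + m - 1) + 1 + 1 := by omega
    have e2 : 1 + i + a + b = (i + a + b - 1) + 1 + 1 := by omega
    rw [e1, e2, psi_succ, psi_succ]
    have e3 : i + a + b + m - 1 + 1 = i + a + b + m := by omega
    have e4 : i + a + b - 1 + 1 = i + a + b := by omega
    rw [e3, e4]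
    push_cast
    ring
  rw [hL, key_s17 a b ha hb m hm]
  rw [psi_succ (b + m), psi_succ b, psi_succ (a + m), psi_succ a, psi_succ (a + b + m),
    psi_succ (a + b + 2 * m), psi_succ (a + b)]
  have h1 : (a : ℝ) ≠ 0 := by positivity
  have h2 : (b : ℝ) ≠ 0 := by positivity
  have h3 : (a : ℝ) + m ≠ 0 := by positivity
  have h4 : (b : ℝ) + m ≠ 0 := by positivity
  have cγ : ((a : ℝ) + b + 2 * m) / (((a : ℝ) + m) * ((b : ℝ) + m))
      = 1 / ((a : ℝ) + m) + 1 / ((b : ℝ) + m) := by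
    field_simp; ring
  linear_combination Real.eulerMascheroniConstant * cγ
end
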